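/- Let E be a Hausdorff topological space, n a natural number, and F₀,…,Fₙ closed subsets of E. Then for every ordinal α, (⋃_{k=0}^n F_k)^(α) = ⋃_{k=0}^n F_k^(α). -/

import Mathlib

/-- The Cantor-Bendixson derivative of a set, by transfinite recursion. -/
noncomputable def cbDeriv {X : Type*} [TopologicalSpace X] (A : Set X) (o : Ordinal) : Set X :=
  Ordinal.limitRecOn o A (fun _ ih => derivedSet ih)
    (fun o _ ih => ⋂ (b : Set.Iio o), ih b.1 b.2)

/-- `IsCB A α p` : the Cantor-Bendixson characteristic of `A` is `(α, p)`,
i.e. `α` is the least ordinal with `A^(α)` finite, and `p = |A^(α)|`. -/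
def IsCB {X : Type*} [TopologicalSpace X] (A : Set X) (α : Ordinal) (p : ℕ) : Prop :=
  (cbDeriv A α).Finite ∧ (∀ β < α, ¬ (cbDeriv A β).Finite) ∧ (cbDeriv A α).ncard = p

lemma cbDeriv_zero {X : Type*} [TopologicalSpace X] (A : Set X) : cbDeriv A 0 = A :=
  Ordinal.limitRecOn_zero ..

lemma cbDeriv_succ {X : Type*} [TopologicalSpace X] (A : Set X) (o : Ordinal) :
    cbDeriv A (Order.succ o) = derivedSet (cbDeriv A o) :=
  Ordinal.limitRecOn_succ ..

lemma cbDeriv_limit {X : Type*} [TopologicalSpace X] (A : Set X) {o : Ordinal}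
    (ho : Order.IsSuccLimit o) : cbDeriv A o = ⋂ (b : Set.Iio o), cbDeriv A b.1 :=
  Ordinal.limitRecOn_limit _ _ _ _ ho

lemma cbDeriv_isClosed {X : Type*} [TopologicalSpace X] [T1Space X] {A : Set X}
    (hA : IsClosed A) (o : Ordinal) : IsClosed (cbDeriv A o) := by
  induction o using Ordinal.limitRecOn with
  | zero => rwa [cbDeriv_zero]
  | add_one o ih => rw [← Order.succ_eq_add_one, cbDeriv_succ]; exact isClosed_derivedSet _
  | limit o ho ih => rw [cbDeriv_limit A ho]; exact isClosed_iInter fun b => ih b.1 b.2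

lemma cbDeriv_antitone {X : Type*} [TopologicalSpace X] [T1Space X] {A : Set X}
    (hA : IsClosed A) {b a : Ordinal} (hba : b ≤ a) : cbDeriv A a ⊆ cbDeriv A b := by
  induction a using Ordinal.limitRecOn with
  | zero => rw [nonpos_iff_eq_zero.mp hba]
  | add_one o ih =>
    rw [← Order.succ_eq_add_one] at hba ⊢
    rcases Order.le_succ_iff_eq_or_le.mp hba with rfl | h
    · exact subset_rfl
    · refine subset_trans ?_ (ih h)
      rw [cbDeriv_succ]
      exact (isClosed_iff_derivedSet_subset _).mp (cbDeriv_isClosed hA o)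
  | limit o ho ih =>
    rcases eq_or_lt_of_le hba with rfl | h
    · exact subset_rfl
    · rw [cbDeriv_limit A ho]
      exact Set.iInter_subset_of_subset ⟨b, h⟩ subset_rfl

lemma derivedSet_empty {X : Type*} [TopologicalSpace X] : derivedSet (∅ : Set X) = ∅ := by
  ext x
  simp [mem_derivedSet, AccPt]

lemma derivedSet_iUnion_fin {X : Type*} [TopologicalSpace X] (m : ℕ) (S : Fin m → Set X) :
    derivedSet (⋃ k, S k) = ⋃ k, derivedSet (S k) := by
  induction m with
  | zero => simp [derivedSet_empty]
  | succ p ih =>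
    have h1 : (⋃ k, S k) = S 0 ∪ ⋃ k : Fin p, S k.succ := by
      ext x; simp [Fin.exists_fin_succ]
    have h2 : (⋃ k, derivedSet (S k)) =
        derivedSet (S 0) ∪ ⋃ k : Fin p, derivedSet (S k.succ) := by
      ext x; simp [Fin.exists_fin_succ]
    rw [h1, h2, derivedSet_union, ih]

theorem stmt9 {E : Type*} [TopologicalSpace E] [T2Space E] (n : ℕ)
    (F : Fin (n + 1) → Set E) (hF : ∀ k, IsClosed (F k)) (α : Ordinal) :
    cbDeriv (⋃ k, F k) α = ⋃ k, cbDeriv (F k) α := by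
  induction α using Ordinal.limitRecOn with
  | zero => simp [cbDeriv_zero]
  | add_one o ih =>
    rw [← Order.succ_eq_add_one o]
    simp only [cbDeriv_succ, ih]
    exact derivedSet_iUnion_fin _ _
  | limit o ho ih =>
    apply subset_antisymm
    · intro x hx
      rw [cbDeriv_limit _ ho] at hx
      simp only [Set.mem_iInter] at hx
      by_contra hne
      simp only [Set.mem_iUnion, not_exists] at hne
      have : ∀ k : Fin (n + 1), ∃ β < o, x ∉ cbDeriv (F k) β := by
        intro k
        by_contra h
        push_neg at h
        apply hne k
        rw [cbDeriv_limit _ ho]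
        exact Set.mem_iInter.mpr fun b => h b.1 b.2
      choose β hβ hxβ using this
      obtain ⟨γ, hγo, hγ⟩ : ∃ γ < o, ∀ k, β k ≤ γ := by
        refine ⟨Finset.univ.sup β, ?_, fun k => Finset.le_sup (Finset.mem_univ k)⟩
        rw [Finset.sup_lt_iff (by simpa using ho.pos)]
        exact fun k _ => hβ k
      have hx' := hx ⟨γ, hγo⟩
      rw [ih γ hγo] at hx'
      obtain ⟨k, hk⟩ := Set.mem_iUnion.mp hx'
      exact hxβ k (cbDeriv_antitone (hF k) (hγ k) hk)
    · refine Set.iUnion_subset fun k => ?_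
      rw [cbDeriv_limit _ ho, cbDeriv_limit _ ho]
      exact Set.iInter_mono fun b => by
        intro x hx
        have := ih b.1 b.2
        exact this ▸ Set.mem_iUnion.mpr ⟨k, hx⟩
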